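/- Let F be a field of characteristic zero. For every n ≥ 1, the F-span of the set of all functions from D × (F·e₁₂) to UT₂ of the form (y, z) ↦ b₀·u₁·b₁·u₂·b₂·⋯·uₙ·bₙ, where b₀, …, bₙ range over UT₂ and exactly one of u₁, …, uₙ equals z while all the others equal y, has dimension exactly n. (This is the multiplicity of the irreducible character indexed by λ = (n−1), μ = (1) in the generalized graded cocharacter of UT₂ under the action of UT₂ itself.) -/

import Mathlib

noncomputable section

/-- The algebra of `2 × 2` matrices over `F` (ambient algebra for `UT₂`). -/
abbrev M2 (F : Type*) [Field F] := Matrix (Fin 2) (Fin 2) F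

/-- The matrix unit `e₁₁`. -/
def e11 (F : Type*) [Field F] : M2 F := Matrix.single 0 0 1

/-- The matrix unit `e₁₂`. -/
def e12 (F : Type*) [Field F] : M2 F := Matrix.single 0 1 1

/-- The matrix unit `e₂₂`. -/
def e22 (F : Type*) [Field F] : M2 F := Matrix.single 1 1 1

/-- `D = F e₁₁ ⊕ F e₂₂`, the even component of the canonical `ℤ₂`-grading of `UT₂`. -/
def Dsub (F : Type*) [Field F] : Submodule F (M2 F) := Submodule.span F {e11 F, e22 F}

/-- `F e₁₂`, the odd component of the canonical `ℤ₂`-grading of `UT₂`. -/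
def oddSub (F : Type*) [Field F] : Submodule F (M2 F) := Submodule.span F {e12 F}

/-- `UT₂`, the set of `2 × 2` upper triangular matrices. -/
def UTset (F : Type*) [Field F] : Set (M2 F) := {M | M 1 0 = 0}

namespace Stmt18Aux
variable {F : Type*} [Field F]

lemma entry_mul (A B : M2 F) (i k : Fin 2) :
    (A * B) i k = A i 0 * B 0 k + A i 1 * B 1 k := by
  simp [Matrix.mul_apply, Fin.sum_univ_two]

lemma e12_ne_zero : (e12 F) ≠ 0 := by
  intro h
  have := congrFun (congrFun h 0) 1
  simp [e12, Matrix.single] at this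

lemma mul_e12 (A : M2 F) (h : A 1 0 = 0) : A * e12 F = A 0 0 • e12 F := by
  ext i k
  fin_cases i <;> fin_cases k <;>
    simp [e12, entry_mul, Matrix.single, Matrix.of_apply, h]

lemma e12_mul (A : M2 F) (h : A 1 0 = 0) : e12 F * A = A 1 1 • e12 F := by
  ext i k
  fin_cases i <;> fin_cases k <;>
    simp [e12, entry_mul, Matrix.single, Matrix.of_apply, h]

lemma tri : ∀ (m : ℕ) (g : Fin m → M2 F), (∀ i, g i 1 0 = 0) →
    (List.ofFn g).prod 1 0 = 0 ∧ (List.ofFn g).prod 1 1 = ∏ i, g i 1 1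
  | 0, g, _ => by simp [Matrix.one_apply]
  | (m+1), g, h => by
      have ih := tri m (fun i => g i.succ) (fun i => h i.succ)
      rw [List.ofFn_succ, List.prod_cons]
      refine ⟨?_, ?_⟩
      · rw [entry_mul, h 0, ih.1]; ring
      · rw [entry_mul, h 0, ih.2, Fin.prod_univ_succ]; ring

lemma key : ∀ (m : ℕ) (g : Fin m → M2 F) (j : Fin m) (d : Fin m → F),
    (∀ i, g i 1 0 = 0) → g j = d j • e12 F →
    (∀ i, i < j → g i 0 0 = d i) → (∀ i, j < i → g i 1 1 = d i) →
    (List.ofFn g).prod = (∏ i, d i) • e12 F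
  | 0, _, j, _, _, _, _, _ => j.elim0
  | (m+1), g, j, d, h10, hj, hlt, hgt => by
    rw [List.ofFn_succ, List.prod_cons]
    rcases Fin.eq_zero_or_eq_succ j with rfl | ⟨j', rfl⟩
    · have htail := tri m (fun i => g i.succ) (fun i => h10 i.succ)
      have hrepl : ∀ i : Fin m, g i.succ 1 1 = d i.succ :=
        fun i => hgt i.succ (Fin.succ_pos i)
      rw [hj, smul_mul_assoc, e12_mul _ htail.1, htail.2,
        Finset.prod_congr rfl (fun i _ => hrepl i), smul_smul, Fin.prod_univ_succ]
    · have ih := key m (fun i => g i.succ) j' (fun i => d i.succ)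
        (fun i => h10 i.succ) hj
        (fun i hi => hlt i.succ (Fin.succ_lt_succ_iff.mpr hi))
        (fun i hi => hgt i.succ (Fin.succ_lt_succ_iff.mpr hi))
      rw [ih, mul_smul_comm, mul_e12 _ (h10 0), smul_smul, Fin.prod_univ_succ,
        hlt 0 (Fin.succ_pos j'), mul_comm]

lemma eval_gen (n : ℕ) (b : Fin (n+1) → M2 F) (j : Fin n) (hb : ∀ i, b i ∈ UTset F)
    (α β γ : F) (y z : M2 F) (hy : y = α • e11 F + β • e22 F) (hz : z = γ • e12 F) :
    b 0 * (List.ofFn fun i : Fin n => (if i = j then z else y) * b i.succ).prod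
      = (b 0 0 0 * ∏ i : Fin n, ((if i < j then α else if i = j then γ else β) *
          (if i < j then b i.succ 0 0 else b i.succ 1 1))) • e12 F := by
  have hb' : ∀ i, b i 1 0 = 0 := hb
  have hy00 : y 0 0 = α := by
    rw [hy]; simp [e11, e22, Matrix.single, Matrix.of_apply]
  have hy01 : y 0 1 = 0 := by
    rw [hy]; simp [e11, e22, Matrix.single, Matrix.of_apply]
  have hy10 : y 1 0 = 0 := by
    rw [hy]; simp [e11, e22, Matrix.single, Matrix.of_apply]
  have hy11 : y 1 1 = β := by
    rw [hy]; simp [e11, e22, Matrix.single, Matrix.of_apply]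
  have hz10 : z 1 0 = 0 := by
    rw [hz]; simp [e12, Matrix.single, Matrix.of_apply]
  have hz11 : z 1 1 = 0 := by
    rw [hz]; simp [e12, Matrix.single, Matrix.of_apply]
  rw [key n _ j (fun i => (if i < j then α else if i = j then γ else β) *
      (if i < j then b i.succ 0 0 else b i.succ 1 1)) ?h10 ?hj ?hlt ?hgt,
    mul_smul_comm, mul_e12 _ (hb' 0), smul_smul]
  case h10 =>
    intro i
    by_cases hij : i = j <;>
      simp [hij, entry_mul, hz10, hz11, hy10, hb' _, mul_comm]
  rw [mul_comm]
  case hj =>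
    show (if j = j then z else y) * b j.succ = ((if j < j then α else if j = j then γ else β) *
      (if j < j then b j.succ 0 0 else b j.succ 1 1)) • e12 F
    rw [if_neg (lt_irrefl j), if_neg (lt_irrefl j), if_pos rfl, if_pos rfl,
      hz, smul_mul_assoc, e12_mul _ (hb' j.succ), smul_smul]
  case hlt =>
    intro i hij
    show ((if i = j then z else y) * b i.succ) 0 0 = (if i < j then α else if i = j then γ else β) *
      (if i < j then b i.succ 0 0 else b i.succ 1 1)
    rw [if_pos hij, if_pos hij, if_neg (ne_of_lt hij), entry_mul, hy00, hy01]
    ring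
  case hgt =>
    intro i hij
    show ((if i = j then z else y) * b i.succ) 1 1 = (if i < j then α else if i = j then γ else β) *
      (if i < j then b i.succ 0 0 else b i.succ 1 1)
    rw [if_neg hij.ne', if_neg hij.ne', if_neg (not_lt_of_gt hij), if_neg (not_lt_of_gt hij),
      entry_mul, hy10, hy11]
    ring

def Gfun (F : Type*) [Field F] (n : ℕ) (j : Fin n) : ↥(Dsub F) × ↥(oddSub F) → M2 F :=
  fun p => (fun _ : Fin (n+1) => (1 : M2 F)) 0 * (List.ofFn fun i : Fin n =>
    (if i = j then ((p.2 : M2 F)) else ((p.1 : M2 F))) *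
      (fun _ : Fin (n+1) => (1 : M2 F)) i.succ).prod

lemma hone (F : Type*) [Field F] (n : ℕ) : ∀ i : Fin (n+1),
    (fun _ : Fin (n+1) => (1 : M2 F)) i ∈ UTset F := by
  intro i
  show (1 : M2 F) 1 0 = 0
  simp [Matrix.one_apply]

lemma Gval (n : ℕ) (j : Fin n) (p : ↥(Dsub F) × ↥(oddSub F)) (α β γ : F)
    (h1 : (p.1 : M2 F) = α • e11 F + β • e22 F) (h2 : (p.2 : M2 F) = γ • e12 F) :
    Gfun F n j p = (∏ i : Fin n, (if i < j then α else if i = j then γ else β)) • e12 F := by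
  rw [Gfun, eval_gen n _ j (hone F n) α β γ _ _ h1 h2]
  congr 1
  simp only [show (1 : M2 F) 0 0 = 1 from by simp [Matrix.one_apply],
    show (1 : M2 F) 1 1 = 1 from by simp [Matrix.one_apply], ite_self, mul_one, one_mul]

lemma hdec (p : ↥(Dsub F) × ↥(oddSub F)) : ∃ α β γ : F,
    (p.1 : M2 F) = α • e11 F + β • e22 F ∧ (p.2 : M2 F) = γ • e12 F := by
  obtain ⟨α, β, h1⟩ := Submodule.mem_span_pair.mp p.1.2
  obtain ⟨γ, h2⟩ := Submodule.mem_span_singleton.mp p.2.2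
  exact ⟨α, β, γ, h1.symm, h2.symm⟩

lemma Glin [CharZero F] (n : ℕ) : LinearIndependent F (Gfun F n) := by
  rw [Fintype.linearIndependent_iff]
  intro c hc
  have hmem1 : ∀ t : F, t • e11 F + e22 F ∈ Dsub F := by
    intro t
    show _ ∈ Submodule.span F {e11 F, e22 F}
    exact add_mem (Submodule.smul_mem _ _ (Submodule.subset_span (Set.mem_insert _ _)))
      (Submodule.subset_span (Set.mem_insert_of_mem _ rfl))
  have hmem2 : e12 F ∈ oddSub F := Submodule.mem_span_singleton_self _
  have hval : ∀ t : F, ∑ j : Fin n, c j * t ^ (j : ℕ) = 0 := by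
    intro t
    have h1 := congrFun hc ((⟨t • e11 F + e22 F, hmem1 t⟩, ⟨e12 F, hmem2⟩) :
      ↥(Dsub F) × ↥(oddSub F))
    rw [Finset.sum_apply] at h1
    have h2 : ∀ j : Fin n, (c j • Gfun F n j) ((⟨t • e11 F + e22 F, hmem1 t⟩, ⟨e12 F, hmem2⟩) :
        ↥(Dsub F) × ↥(oddSub F)) = (c j * t ^ (j:ℕ)) • e12 F := by
      intro j
      rw [Pi.smul_apply, Gval n j _ t 1 1 (by rw [one_smul]) (by rw [one_smul]), smul_smul]
      congr 2
      calc ∏ i : Fin n, (if i < j then t else if i = j then (1:F) else 1)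
          = ∏ i : Fin n, (if i < j then t else 1) :=
            Finset.prod_congr rfl fun i _ => by split <;> simp
        _ = t ^ (j:ℕ) := by
            rw [Finset.prod_ite, Finset.prod_const, Finset.prod_const_one, mul_one]
            congr 1
            rw [show Finset.univ.filter (fun i : Fin n => i < j) = Finset.Iio j from by
              ext; simp]
            exact Fin.card_Iio j
    rw [Finset.sum_congr rfl fun j _ => h2 j, ← Finset.sum_smul, Pi.zero_apply] at h1
    rcases smul_eq_zero.mp h1 with h | h
    · exact h
    · exact absurd h e12_ne_zero
  have hP0 : (∑ j : Fin n, Polynomial.C (c j) * Polynomial.X ^ (j:ℕ)) = 0 := by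
    apply Polynomial.funext
    intro t
    rw [Polynomial.eval_zero, Polynomial.eval_finset_sum]
    simpa using hval t
  intro i
  have hcoeff := congrArg (fun q => Polynomial.coeff q (i : ℕ)) hP0
  simp only [Polynomial.finset_sum_coeff, Polynomial.coeff_C_mul, Polynomial.coeff_X_pow,
    Polynomial.coeff_zero] at hcoeff
  rwa [Finset.sum_eq_single i (fun j _ hji => by
      rw [if_neg (fun h => hji (Fin.val_injective h.symm)), mul_zero])
    (fun h => absurd (Finset.mem_univ i) h), if_pos rfl, mul_one] at hcoeff

end Stmt18Aux

open Stmt18Aux in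
set_option maxHeartbeats 1000000 in
/-- For every `n ≥ 1`, the `F`-span of the functions
`D × (F e₁₂) → UT₂` of the form `(y, z) ↦ b₀ u₁ b₁ u₂ b₂ ⋯ uₙ bₙ`, where `b₀, …, bₙ`
range over `UT₂` and exactly one of `u₁, …, uₙ` equals `z` while all the others equal `y`,
has dimension exactly `n`. -/
theorem stmt18 (F : Type*) [Field F] [CharZero F] (n : ℕ) (hn : 1 ≤ n) :
    Module.finrank F ↥(Submodule.span F
      {f : ↥(Dsub F) × ↥(oddSub F) → M2 F |
        ∃ (b : Fin (n + 1) → M2 F) (j : Fin n),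
        (∀ i, b i ∈ UTset F) ∧
        f = fun p : ↥(Dsub F) × ↥(oddSub F) =>
          b 0 * (List.ofFn fun i : Fin n =>
            (if i = j then ((p.2 : M2 F)) else ((p.1 : M2 F))) * b i.succ).prod})
      = n := by
  classical
  have hspan : Submodule.span F
      {f : ↥(Dsub F) × ↥(oddSub F) → M2 F |
        ∃ (b : Fin (n + 1) → M2 F) (j : Fin n),
        (∀ i, b i ∈ UTset F) ∧
        f = fun p : ↥(Dsub F) × ↥(oddSub F) =>
          b 0 * (List.ofFn fun i : Fin n =>
            (if i = j then ((p.2 : M2 F)) else ((p.1 : M2 F))) * b i.succ).prod}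
      = Submodule.span F (Set.range (Gfun F n)) := by
    refine le_antisymm (Submodule.span_le.mpr ?_) (Submodule.span_le.mpr ?_)
    · rintro f ⟨b, j, hb, rfl⟩
      have heq : (fun p : ↥(Dsub F) × ↥(oddSub F) =>
          b 0 * (List.ofFn fun i : Fin n =>
            (if i = j then ((p.2 : M2 F)) else ((p.1 : M2 F))) * b i.succ).prod)
          = (b 0 0 0 * ∏ i : Fin n,
              (if i < j then b i.succ 0 0 else b i.succ 1 1)) • Gfun F n j := by
        funext p
        obtain ⟨α, β, γ, h1, h2⟩ := hdec p
        rw [Pi.smul_apply, Gval n j p α β γ h1 h2, eval_gen n b j hb α β γ _ _ h1 h2,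
          smul_smul]
        congr 1
        rw [Finset.prod_mul_distrib]
        ring
      rw [heq]
      exact Submodule.smul_mem _ _ (Submodule.subset_span ⟨j, rfl⟩)
    · rintro f ⟨j, rfl⟩
      exact Submodule.subset_span ⟨fun _ => (1 : M2 F), j, hone F n, by unfold Gfun; exact rfl⟩
  have hcard := finrank_span_eq_card (Glin (F := F) n)
  rw [hspan, hcard, Fintype.card_fin]
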